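/- Let G be a connected P5-free chordal bipartite graph with bipartition (A,B), maximum biclique (A1,B1), A2 = A \ A1 = (u_1,...,u_p) in Nested Neighborhood Ordering, and suppose G has a Hamiltonian cycle. Then |A| = |B| and for every g with 1 ≤ g ≤ p, deg(u_g) > g; similarly for every vertex v_h in the NNO ordering (v_1,...,v_q) of B2 = B \ B1, deg(v_h) > h. -/

import Mathlib

open SimpleGraph Finset

variable {V : Type*}

/-- `(A, B)` is a bipartition of the graph `G`. -/
def IsBipartitionOf (G : SimpleGraph V) (A B : Finset V) : Prop :=
  Disjoint A B ∧ (∀ v : V, v ∈ A ∨ v ∈ B) ∧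
    ∀ ⦃x y : V⦄, G.Adj x y → (x ∈ A ∧ y ∈ B) ∨ (x ∈ B ∧ y ∈ A)

/-- `G` has no induced path on `n` vertices. -/
def PFree (n : ℕ) (G : SimpleGraph V) : Prop :=
  ∀ f : Fin n → V, Function.Injective f →
    ¬ (∀ i j : Fin n, G.Adj (f i) (f j) ↔ ((i : ℕ) + 1 = (j : ℕ) ∨ (j : ℕ) + 1 = (i : ℕ)))

/-- Every cycle of length at least 6 has a chord. -/
def ChordalBipartite (G : SimpleGraph V) : Prop :=
  ∀ (v : V) (c : G.Walk v v), c.IsCycle → 6 ≤ c.length →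
    ∃ x y : V, x ∈ c.support ∧ y ∈ c.support ∧ G.Adj x y ∧ s(x, y) ∉ c.edges

/-- `(A1, B1)` is a maximal biclique of `G` within the bipartition `(A, B)`:
it is a complete bipartite subgraph and no vertex can be added to either side. -/
def IsMaximalBiclique (G : SimpleGraph V) (A B A1 B1 : Finset V) : Prop :=
  A1 ⊆ A ∧ B1 ⊆ B ∧ (∀ x ∈ A1, ∀ y ∈ B1, G.Adj x y) ∧
    (∀ x ∈ A, (∀ y ∈ B1, G.Adj x y) → x ∈ A1) ∧
    (∀ y ∈ B, (∀ x ∈ A1, G.Adj x y) → y ∈ B1)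

section StmtHelpers
variable {G : SimpleGraph V}

private lemma getVert_eq_getD {u v : V} (w : G.Walk u v) (d : V) :
    ∀ i, i ≤ w.length → w.support.getD i d = w.getVert i := by
  induction w with
  | nil =>
    intro i hi
    have : i = 0 := Nat.le_zero.mp hi
    subst this
    simp
  | cons h q ih =>
    intro i hi
    cases i with
    | zero => simp
    | succ i =>
      simp only [Walk.support_cons, List.getD_cons_succ, Walk.getVert_cons_succ]
      exact ih i (by simpa using hi)

private lemma card_filter_eq [Fintype V] [DecidableEq V] {n : ℕ} [NeZero n]
    (F : ZMod n → V) (hFbij : Function.Bijective F) (S : Finset V) :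
    (Finset.univ.filter (fun i => F i ∈ S)).card = S.card := by
  apply Finset.card_bij (fun a _ => F a)
  · intro a ha
    exact (Finset.mem_filter.mp ha).2
  · intro a _ b _ hab
    exact hFbij.injective hab
  · intro b hb
    obtain ⟨a, rfl⟩ := hFbij.surjective b
    exact ⟨a, Finset.mem_filter.mpr ⟨Finset.mem_univ _, hb⟩, rfl⟩

private lemma card_eq_of_cycleF [Fintype V] [DecidableEq V] {n : ℕ} [NeZero n]
    {A B : Finset V} (hbip : IsBipartitionOf G A B)
    (F : ZMod n → V) (hFbij : Function.Bijective F)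
    (hFadj : ∀ i, G.Adj (F i) (F (i + 1))) : A.card = B.card := by
  obtain ⟨hdisj, -, hadjAB⟩ := hbip
  have hAB : ∀ {x : V}, x ∈ A → x ∉ B := fun hx => Finset.disjoint_left.mp hdisj hx
  have step : ∀ i : ZMod n, F i ∈ A → F (i + 1) ∈ B := by
    intro i hi
    rcases hadjAB (hFadj i) with ⟨h1, h2⟩ | ⟨h1, h2⟩
    · exact h2
    · exact absurd h1 (hAB hi)
  have step' : ∀ i : ZMod n, F i ∈ B → F (i + 1) ∈ A := by
    intro i hi
    rcases hadjAB (hFadj i) with ⟨h1, h2⟩ | ⟨h1, h2⟩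
    · exact absurd hi (hAB h1)
    · exact h2
  rw [← card_filter_eq F hFbij A, ← card_filter_eq F hFbij B]
  apply le_antisymm
  · apply Finset.card_le_card_of_injOn (fun i => i + 1)
    · intro i hi
      simp only [Finset.mem_coe, Finset.mem_filter, Finset.mem_univ, true_and] at hi ⊢
      exact step i hi
    · intro a _ b _ hab
      simpa using hab
  · apply Finset.card_le_card_of_injOn (fun i => i + 1)
    · intro i hi
      simp only [Finset.mem_coe, Finset.mem_filter, Finset.mem_univ, true_and] at hi ⊢
      exact step' i hi
    · intro a _ b _ hab
      simpa using hab

private lemma zmod_closed {n : ℕ} [NeZero n] (K : Finset (ZMod n)) (hne : K.Nonempty)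
    (hcl : ∀ k ∈ K, k + 1 ∈ K) : ∀ x, x ∈ K := by
  obtain ⟨k, hk⟩ := hne
  have h : ∀ m : ℕ, k + (m : ZMod n) ∈ K := by
    intro m
    induction m with
    | zero => simpa using hk
    | succ m ih =>
      push_cast
      rw [← add_assoc]
      exact hcl _ ih
  intro x
  have hx := h (x - k).val
  rwa [ZMod.natCast_rightInverse _, show k + (x - k) = x by ring] at hx

private lemma countingF [Fintype V] [DecidableEq V] {n : ℕ} [NeZero n]
    (F : ZMod n → V) (hFbij : Function.Bijective F)
    (hFadj : ∀ i, G.Adj (F i) (F (i + 1)))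
    (S T : Finset V) (hSne : S.Nonempty)
    (hclosed : ∀ x ∈ S, ∀ y, G.Adj x y → y ∈ T) :
    S.card < T.card ∨ ∀ x : V, x ∈ S ∨ x ∈ T := by
  classical
  set I := Finset.univ.filter (fun i => F i ∈ S) with hI
  set J := Finset.univ.filter (fun i => F i ∈ T) with hJ
  have hplus : ∀ i ∈ I, i + 1 ∈ J := by
    intro i hi
    simp only [hI, hJ, Finset.mem_filter, Finset.mem_univ, true_and] at hi ⊢
    exact hclosed _ hi _ (hFadj i)
  have hminus : ∀ i ∈ I, i - 1 ∈ J := by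
    intro i hi
    simp only [hI, hJ, Finset.mem_filter, Finset.mem_univ, true_and] at hi ⊢
    have h := (hFadj (i - 1)).symm
    rw [sub_add_cancel] at h
    exact hclosed _ hi _ h
  have hIJ : I.card ≤ J.card := by
    apply Finset.card_le_card_of_injOn (fun i => i + 1) hplus
    intro a _ b _ hab
    simpa using hab
  rcases lt_or_eq_of_le hIJ with hlt | heq
  · left
    rwa [card_filter_eq F hFbij S, card_filter_eq F hFbij T] at hlt
  · right
    have h2 : I.image (fun i => i - 1) = J := by
      apply Finset.eq_of_subset_of_card_le
      · intro j hj
        obtain ⟨i, hi, rfl⟩ := Finset.mem_image.mp hj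
        exact hminus i hi
      · rw [Finset.card_image_of_injective _ (fun a b hab => by simpa using hab)]
        omega
    have hKcl : ∀ k ∈ I ∪ J, k + 1 ∈ I ∪ J := by
      intro k hk
      rcases Finset.mem_union.mp hk with hk | hk
      · exact Finset.mem_union_right _ (hplus k hk)
      · rw [← h2] at hk
        obtain ⟨i, hi, rfl⟩ := Finset.mem_image.mp hk
        rw [sub_add_cancel]
        exact Finset.mem_union_left _ hi
    have hKne : (I ∪ J).Nonempty := by
      obtain ⟨s, hs⟩ := hSne
      obtain ⟨i, rfl⟩ := hFbij.surjective s
      exact ⟨i, Finset.mem_union_left _ (by simp [hI, hs])⟩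
    have hall := zmod_closed _ hKne hKcl
    intro x
    obtain ⟨i, rfl⟩ := hFbij.surjective x
    rcases Finset.mem_union.mp (hall i) with h | h
    · exact Or.inl (by simpa [hI] using h)
    · exact Or.inr (by simpa [hJ] using h)

private lemma exists_cycleF [Fintype V] [DecidableEq V] {a : V} (c : G.Walk a a)
    (hc : c.IsHamiltonianCycle) :
    ∀ _ : NeZero c.length, ∃ F : ZMod c.length → V, Function.Bijective F ∧
      ∀ i, G.Adj (F i) (F (i + 1)) := by
  intro hnz
  have hn3 : 3 ≤ c.length := hc.isCycle.three_le_length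
  haveI : Fact (1 < c.length) := ⟨by omega⟩
  set n := c.length with hn
  set F : ZMod n → V := fun i => c.getVert (i.val + 1) with hF
  have hcardV : Fintype.card V = n := hc.length_eq.symm
  have htl : c.support.tail.Nodup := hc.isCycle.support_nodup
  have htllen : c.support.tail.length = n := by
    rw [List.length_tail, Walk.length_support]
    omega
  have hgetD : ∀ i : ZMod n, F i = c.support.tail.getD i.val a := by
    intro i
    have hi : i.val < n := ZMod.val_lt i
    have h1 : c.support.getD (i.val + 1) a = c.getVert (i.val + 1) :=
      getVert_eq_getD c a _ (by omega)
    have h2 : c.support.getD (i.val + 1) a = c.support.tail.getD i.val a := by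
      conv_lhs => rw [Walk.support_eq_cons]
      rw [List.getD_cons_succ]
    rw [hF]
    simp only []
    rw [← h1, h2]
  have hinj : Function.Injective F := by
    intro i j hij
    have hi : i.val < n := ZMod.val_lt i
    have hj : j.val < n := ZMod.val_lt j
    rw [hgetD i, hgetD j] at hij
    rw [List.getD_eq_getElem _ _ (by omega), List.getD_eq_getElem _ _ (by omega)] at hij
    have := (htl.getElem_inj_iff).mp hij
    exact ZMod.val_injective n this
  have hbij : Function.Bijective F := by
    rw [Fintype.bijective_iff_injective_and_card]
    refine ⟨hinj, ?_⟩
    rw [ZMod.card, hcardV]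
  refine ⟨F, hbij, ?_⟩
  intro i
  have hi : i.val < n := ZMod.val_lt i
  by_cases h1 : i.val + 1 < n
  · have hv : (i + 1).val = i.val + 1 := by
      rw [ZMod.val_add_of_lt]
      · rw [ZMod.val_one]
      · rw [ZMod.val_one]; omega
    rw [hF]
    simp only [hv]
    exact c.adj_getVert_succ (by omega)
  · have hin : i.val + 1 = n := by omega
    have hi1 : i + 1 = 0 := by
      have : ((i.val : ℕ) : ZMod n) = i := ZMod.natCast_rightInverse i
      rw [← this]
      rw [show ((i.val : ℕ) : ZMod n) + 1 = ((i.val + 1 : ℕ) : ZMod n) by push_cast; ring]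
      rw [hin]
      exact ZMod.natCast_self n
    rw [hF]
    simp only [hi1, ZMod.val_zero, zero_add]
    have h0 : c.getVert (i.val + 1) = a := by
      rw [hin]
      exact c.getVert_length
    rw [h0]
    have h3 := c.adj_getVert_succ (show 0 < c.length by omega)
    rwa [Walk.getVert_zero] at h3

private lemma dist_getVert_le (hconn : G.Connected) {u v : V} (w : G.Walk u v) :
    ∀ i, G.dist u (w.getVert i) ≤ i := by
  induction w with
  | nil =>
    intro i
    rw [Walk.getVert_of_length_le Walk.nil (by simp)]
    simp only [SimpleGraph.dist_self]
    omega
  | @cons a b c h q ih =>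
    intro i
    cases i with
    | zero => simp
    | succ i =>
      rw [Walk.getVert_cons_succ]
      calc G.dist a (q.getVert i) ≤ G.dist a b + G.dist b (q.getVert i) := hconn.dist_triangle
        _ ≤ 1 + i := by
            have h1 : G.dist a b ≤ 1 := by
              have := SimpleGraph.dist_le (Walk.cons h Walk.nil)
              simpa using this
            exact Nat.add_le_add h1 (ih i)
        _ = i + 1 := by omega

private lemma getVert_dist_le {u v : V} (w : G.Walk u v) :
    ∀ i, G.dist (w.getVert i) v ≤ w.length - i := by
  induction w with
  | nil =>
    intro i
    rw [Walk.getVert_of_length_le Walk.nil (by simp)]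
    simp
  | @cons a b c h q ih =>
    intro i
    cases i with
    | zero =>
      rw [Walk.getVert_zero]
      calc G.dist a c ≤ (Walk.cons h q).length := SimpleGraph.dist_le _
        _ = (Walk.cons h q).length - 0 := by omega
    | succ i =>
      rw [Walk.getVert_cons_succ]
      calc G.dist (q.getVert i) c ≤ q.length - i := ih i
        _ = (Walk.cons h q).length - (i + 1) := by rw [Walk.length_cons]; omega

private lemma exists_common_nbr {A B : Finset V} (hconn : G.Connected)
    (hbip : IsBipartitionOf G A B) (hp5 : PFree 5 G)
    {x y : V} (hx : x ∈ A) (hy : y ∈ A) (hxy : x ≠ y) :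
    ∃ z, G.Adj x z ∧ G.Adj y z := by
  obtain ⟨hdisj, -, hadjAB⟩ := hbip
  have hAB : ∀ {z : V}, z ∈ A → z ∉ B := fun hz => Finset.disjoint_left.mp hdisj hz
  have hmemB : ∀ {z z' : V}, z ∈ A → G.Adj z z' → z' ∈ B := by
    intro z z' hz hadj
    rcases hadjAB hadj with ⟨h1, h2⟩ | ⟨h1, h2⟩
    · exact h2
    · exact absurd h1 (hAB hz)
  have hmemA : ∀ {z z' : V}, z ∈ B → G.Adj z z' → z' ∈ A := by
    intro z z' hz hadj
    rcases hadjAB hadj with ⟨h1, h2⟩ | ⟨h1, h2⟩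
    · exact absurd hz (hAB h1)
    · exact h2
  obtain ⟨w, hw⟩ := hconn.exists_walk_length_eq_dist x y
  set L := w.length with hL
  have hL0 : L ≠ 0 := fun h => hxy (Walk.eq_of_length_eq_zero h)
  have hL1 : L ≠ 1 := by
    intro h
    have hadj := w.adj_getVert_succ (by omega : 0 < w.length)
    rw [Walk.getVert_zero] at hadj
    have h2 : w.getVert 1 = y := by rw [show (1:ℕ) = w.length by omega, Walk.getVert_length]
    rw [h2] at hadj
    exact hAB hy (hmemB hx hadj)
  by_cases hL2 : L = 2
  · have h01 := w.adj_getVert_succ (by omega : 0 < w.length)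
    have h12 := w.adj_getVert_succ (by omega : 1 < w.length)
    rw [Walk.getVert_zero] at h01
    have h2 : w.getVert 2 = y := by rw [show (2:ℕ) = w.length by omega, Walk.getVert_length]
    rw [h2] at h12
    exact ⟨w.getVert 1, h01, h12.symm⟩
  by_cases hL3 : L = 3
  · exfalso
    have h01 := w.adj_getVert_succ (by omega : 0 < w.length)
    have h12 := w.adj_getVert_succ (by omega : 1 < w.length)
    have h23 := w.adj_getVert_succ (by omega : 2 < w.length)
    rw [Walk.getVert_zero] at h01
    have h3 : w.getVert 3 = y := by rw [show (3:ℕ) = w.length by omega, Walk.getVert_length]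
    rw [h3] at h23
    have hb1 : w.getVert 1 ∈ B := hmemB hx h01
    have hb2 : w.getVert 2 ∈ A := hmemA hb1 h12
    exact hAB hy (hmemB hb2 h23)
  -- L ≥ 4
  exfalso
  have hL4 : 4 ≤ L := by omega
  have hdist : G.dist x y = L := hw.symm
  have hne : ∀ i j : ℕ, i < j → j ≤ 4 → w.getVert i ≠ w.getVert j := by
    intro i j hij hj4 hgij
    have h1 : G.dist x (w.getVert i) ≤ i := dist_getVert_le hconn w i
    have h2 : G.dist (w.getVert j) y ≤ L - j := getVert_dist_le w j
    have h3 : G.dist x y ≤ i + (L - j) := by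
      calc G.dist x y ≤ G.dist x (w.getVert i) + G.dist (w.getVert i) y := hconn.dist_triangle
        _ ≤ i + (L - j) := by
            rw [← hgij] at h2
            exact Nat.add_le_add h1 h2
    omega
  have hchord : ∀ i j : ℕ, i < j → j ≤ 4 → G.Adj (w.getVert i) (w.getVert j) → j = i + 1 := by
    intro i j hij hj4 hadj
    by_contra hne2
    have h1 : G.dist x (w.getVert i) ≤ i := dist_getVert_le hconn w i
    have h2 : G.dist (w.getVert j) y ≤ L - j := getVert_dist_le w j
    have hd1 : G.dist (w.getVert i) (w.getVert j) ≤ 1 := by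
      have := SimpleGraph.dist_le (Walk.cons hadj Walk.nil)
      simpa using this
    have h3 : G.dist x y ≤ i + (1 + (L - j)) := by
      calc G.dist x y ≤ G.dist x (w.getVert i) + G.dist (w.getVert i) y := hconn.dist_triangle
        _ ≤ i + (G.dist (w.getVert i) (w.getVert j) + G.dist (w.getVert j) y) :=
            Nat.add_le_add h1 hconn.dist_triangle
        _ ≤ i + (1 + (L - j)) := by
            exact Nat.add_le_add le_rfl (Nat.add_le_add hd1 h2)
    omega
  set f : Fin 5 → V := fun k => w.getVert k with hf
  have hinj : Function.Injective f := by
    intro i j hij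
    rcases lt_trichotomy (i : ℕ) (j : ℕ) with h | h | h
    · exact absurd hij (hne i j h (by omega))
    · exact Fin.ext h
    · exact absurd hij.symm (hne j i h (by omega))
  apply hp5 f hinj
  intro i j
  constructor
  · intro hadj
    rcases lt_trichotomy (i : ℕ) (j : ℕ) with h | h | h
    · left; exact (hchord i j h (by omega) hadj).symm
    · exfalso; exact G.irrefl (by rwa [show (i:Fin 5) = j from Fin.ext h] at hadj)
    · right; exact (hchord j i h (by omega) hadj.symm).symm
  · intro hcons
    rcases hcons with h | h
    · have hlt : ((i : ℕ) : ℕ) < w.length := by omega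
      have hadj := w.adj_getVert_succ hlt
      show G.Adj (w.getVert (i : ℕ)) (w.getVert (j : ℕ))
      rw [show ((j : ℕ) : ℕ) = (i : ℕ) + 1 by omega]
      exact hadj
    · have hlt : ((j : ℕ) : ℕ) < w.length := by omega
      have hadj := w.adj_getVert_succ hlt
      have h5 : G.Adj (w.getVert (j : ℕ)) (w.getVert (i : ℕ)) := by
        rw [show ((i : ℕ) : ℕ) = (j : ℕ) + 1 by omega]
        exact hadj
      exact h5.symm

private lemma nbhd_comparable {A B : Finset V} (hconn : G.Connected)
    (hbip : IsBipartitionOf G A B) (hp5 : PFree 5 G)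
    {x y : V} (hx : x ∈ A) (hy : y ∈ A) :
    (∀ z, G.Adj x z → G.Adj y z) ∨ (∀ z, G.Adj y z → G.Adj x z) := by
  by_cases hxy : x = y
  · subst hxy; exact Or.inl fun z h => h
  by_contra hcon
  push_neg at hcon
  obtain ⟨⟨b, hxb, hyb⟩, ⟨b', hyb', hxb'⟩⟩ := hcon
  obtain ⟨c, hxc, hyc⟩ := exists_common_nbr hconn hbip hp5 hx hy hxy
  obtain ⟨hdisj, -, hadjAB⟩ := hbip
  have hAB : ∀ {z : V}, z ∈ A → z ∉ B := fun hz => Finset.disjoint_left.mp hdisj hz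
  have hmemB : ∀ {z z' : V}, z ∈ A → G.Adj z z' → z' ∈ B := by
    intro z z' hz hadj
    rcases hadjAB hadj with ⟨h1, h2⟩ | ⟨h1, h2⟩
    · exact h2
    · exact absurd h1 (hAB hz)
  have hb : b ∈ B := hmemB hx hxb
  have hc : c ∈ B := hmemB hx hxc
  have hb' : b' ∈ B := hmemB hy hyb'
  have hnadjB : ∀ {z z' : V}, z ∈ B → z' ∈ B → ¬ G.Adj z z' := by
    intro z z' hz hz' hadj
    rcases hadjAB hadj with ⟨h1, h2⟩ | ⟨h1, h2⟩
    · exact hAB h1 hz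
    · exact hAB h2 hz'
  have hnadjA : ∀ {z z' : V}, z ∈ A → z' ∈ A → ¬ G.Adj z z' := by
    intro z z' hz hz' hadj
    rcases hadjAB hadj with ⟨h1, h2⟩ | ⟨h1, h2⟩
    · exact hAB hz' h2
    · exact hAB hz h1
  -- distinctness
  have hbx : b ≠ x := fun h => hAB hx (h ▸ hb)
  have hby : b ≠ y := fun h => hAB hy (h ▸ hb)
  have hcx : c ≠ x := fun h => hAB hx (h ▸ hc)
  have hcy : c ≠ y := fun h => hAB hy (h ▸ hc)
  have hb'x : b' ≠ x := fun h => hAB hx (h ▸ hb')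
  have hb'y : b' ≠ y := fun h => hAB hy (h ▸ hb')
  have hbc : b ≠ c := fun h => hyb (h ▸ hyc)
  have hbb' : b ≠ b' := fun h => hxb' (h ▸ hxb)
  have hcb' : c ≠ b' := fun h => hxb' (h ▸ hxc)
  set f : Fin 5 → V := ![b, x, c, y, b'] with hf
  have hinj : Function.Injective f := by
    intro i j hij
    fin_cases i <;> fin_cases j <;>
      first
        | rfl
        | (simp [hf, hxy, hbx, hby, hcx, hcy, hb'x, hb'y, hbc, hbb', hcb',
            Ne.symm hbx, Ne.symm hby, Ne.symm hcx, Ne.symm hcy, Ne.symm hb'x, Ne.symm hb'y,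
            Ne.symm hbc, Ne.symm hbb', Ne.symm hcb', Ne.symm hxy] at hij)
  apply hp5 f hinj
  intro i j
  fin_cases i <;> fin_cases j <;>
    (simp only [hf]; norm_num) <;>
    first
      | exact G.irrefl
      | exact hxb.symm
      | exact hxb
      | exact hxc
      | exact hxc.symm
      | exact hyc
      | exact hyc.symm
      | exact hyb'
      | exact hyb'.symm
      | (exact fun h => hnadjB hb hc h)
      | (exact fun h => hnadjB hc hb h)
      | (exact fun h => hnadjB hb hb' h)
      | (exact fun h => hnadjB hb' hb h)
      | (exact fun h => hnadjB hc hb' h)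
      | (exact fun h => hnadjB hb' hc h)
      | (exact fun h => hnadjA hx hy h)
      | (exact fun h => hnadjA hy hx h)
      | (exact fun h => hyb h.symm)
      | (exact fun h => hyb h)
      | (exact fun h => hxb' h)
      | (exact fun h => hxb' h.symm)

private lemma side_bound [Fintype V] [DecidableEq V] [DecidableRel G.Adj]
    {n : ℕ} [NeZero n] {A B A1 B1 : Finset V} {p : ℕ} (u : Fin p → V)
    (hconn : G.Connected) (hbip : IsBipartitionOf G A B) (hp5 : PFree 5 G)
    (hB1 : B1 ⊆ B)
    (hmax4 : ∀ x ∈ A, (∀ y ∈ B1, G.Adj x y) → x ∈ A1)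
    (hu : Function.Injective u)
    (huA : ∀ i, u i ∈ A \ A1)
    (humono : ∀ i j : Fin p, i ≤ j → G.degree (u i) ≤ G.degree (u j))
    (F : ZMod n → V) (hFbij : Function.Bijective F)
    (hFadj : ∀ i, G.Adj (F i) (F (i + 1)))
    (g : Fin p) : (g : ℕ) + 1 < G.degree (u g) := by
  classical
  set S : Finset V := (Finset.Iic g).image u with hS
  set T : Finset V := G.neighborFinset (u g) with hT
  have hScard : S.card = (g : ℕ) + 1 := by
    rw [hS, Finset.card_image_of_injective _ hu, Fin.card_Iic]
  have hTcard : T.card = G.degree (u g) := G.card_neighborFinset_eq_degree _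
  have hnested : ∀ i : Fin p, i ≤ g → ∀ z, G.Adj (u i) z → G.Adj (u g) z := by
    intro i hig
    rcases nbhd_comparable hconn hbip hp5 (Finset.mem_sdiff.mp (huA i)).1
        (Finset.mem_sdiff.mp (huA g)).1 with h | h
    · exact h
    · -- N(u g) ⊆ N(u i), so degrees equal, so neighborhoods equal
      have hsub : G.neighborFinset (u g) ⊆ G.neighborFinset (u i) := by
        intro z hz
        rw [SimpleGraph.mem_neighborFinset] at *
        exact h z hz
      have hdeg : G.degree (u i) ≤ G.degree (u g) := humono i g hig
      have heq : G.neighborFinset (u g) = G.neighborFinset (u i) :=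
        Finset.eq_of_subset_of_card_le hsub (by
          rw [G.card_neighborFinset_eq_degree, G.card_neighborFinset_eq_degree]; exact hdeg)
      intro z hz
      rw [← SimpleGraph.mem_neighborFinset, heq, SimpleGraph.mem_neighborFinset]
      exact hz
  have hclosed : ∀ x ∈ S, ∀ y, G.Adj x y → y ∈ T := by
    intro x hx y hadj
    obtain ⟨i, hi, rfl⟩ := Finset.mem_image.mp hx
    rw [hT, SimpleGraph.mem_neighborFinset]
    exact hnested i (Finset.mem_Iic.mp hi) y hadj
  have hSne : S.Nonempty := ⟨u g, Finset.mem_image.mpr ⟨g, Finset.mem_Iic.mpr le_rfl, rfl⟩⟩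
  rcases countingF F hFbij hFadj S T hSne hclosed with h | h
  · rwa [hScard, hTcard] at h
  · exfalso
    have hadjB1 : ∀ yb ∈ B1, G.Adj (u g) yb := by
      intro yb hyb
      rcases h yb with hyS | hyT
      · exfalso
        obtain ⟨i, -, rfl⟩ := Finset.mem_image.mp hyS
        exact Finset.disjoint_left.mp hbip.1 (Finset.mem_sdiff.mp (huA i)).1 (hB1 hyb)
      · rwa [hT, SimpleGraph.mem_neighborFinset] at hyT
    have : u g ∈ A1 := hmax4 (u g) (Finset.mem_sdiff.mp (huA g)).1 hadjB1
    exact (Finset.mem_sdiff.mp (huA g)).2 this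

end StmtHelpers

theorem stmt6 [Fintype V] [DecidableEq V] (G : SimpleGraph V) [DecidableRel G.Adj]
    (A B A1 B1 : Finset V) {p q : ℕ} (u : Fin p → V) (v : Fin q → V)
    (hconn : G.Connected) (hbip : IsBipartitionOf G A B)
    (hcb : ChordalBipartite G) (hp5 : PFree 5 G)
    (hmax : IsMaximalBiclique G A B A1 B1)
    -- `u` enumerates `A \ A1` in non-decreasing degree order (NNO)
    (hu : Function.Injective u) (huA : ∀ i, u i ∈ A \ A1)
    (huAll : ∀ x ∈ A \ A1, ∃ i, u i = x)
    (humono : ∀ i j : Fin p, i ≤ j → G.degree (u i) ≤ G.degree (u j))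
    -- `v` enumerates `B \ B1` in non-decreasing degree order (NNO)
    (hv : Function.Injective v) (hvB : ∀ j, v j ∈ B \ B1)
    (hvAll : ∀ y ∈ B \ B1, ∃ j, v j = y)
    (hvmono : ∀ i j : Fin q, i ≤ j → G.degree (v i) ≤ G.degree (v j))
    (hham : ∃ (a : V) (c : G.Walk a a), c.IsHamiltonianCycle) :
    A.card = B.card ∧ (∀ g : Fin p, (g : ℕ) + 1 < G.degree (u g)) ∧
      (∀ h : Fin q, (h : ℕ) + 1 < G.degree (v h)) := by
  classical
  obtain ⟨a, c, hc⟩ := hham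
  have hn3 : 3 ≤ c.length := hc.isCycle.three_le_length
  haveI hnz : NeZero c.length := ⟨by omega⟩
  obtain ⟨F, hFbij, hFadj⟩ := exists_cycleF c hc hnz
  have hbip' : IsBipartitionOf G B A :=
    ⟨hbip.1.symm, fun w => (hbip.2.1 w).symm, fun x y h => (hbip.2.2 h).symm⟩
  refine ⟨card_eq_of_cycleF hbip F hFbij hFadj, ?_, ?_⟩
  · intro g
    exact side_bound u hconn hbip hp5 hmax.2.1 hmax.2.2.2.1 hu huA humono F hFbij hFadj g
  · intro h
    exact side_bound v hconn hbip' hp5 hmax.1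
      (fun yB hyB hadj => hmax.2.2.2.2 yB hyB (fun x hx => (hadj x hx).symm))
      hv hvB hvmono F hFbij hFadj h
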